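/- Let f : ℝ → ℝ be continuous at 0, and suppose that for every t ∈ I the series F(t) := −∑_{k=0}^∞ q^{[k]_n}·t^{n^k}·(q^{n^k}·t^{n^k·(n−1)} − 1)·f(q^{[k]_n}·t^{n^k}) converges. Then F is an n,q-antiderivative of f on I: D_{n,q} F(t) = f(t) for all t ∈ I (in particular, F is differentiable at 0 with F′(0) = f(0)). -/

import Mathlib

open Filter Topology
open scoped Classical

noncomputable section

/-- `[k]_n = ∑_{i=0}^{k-1} n^i` (so `[0]_n = 0`). -/
def nbr (n k : ℕ) : ℕ := ∑ i ∈ Finset.range k, n ^ i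

/-- `h(t) = q·t^n`. -/
def hfun (q : ℝ) (n : ℕ) (t : ℝ) : ℝ := q * t ^ n

/-- `θ = q^(1/(1-n))` (meaningful for `n ≥ 3`). -/
def theta (q : ℝ) (n : ℕ) : ℝ := q ^ ((1 : ℝ) / (1 - (n : ℝ)))

/-- `S = {0}` if `n = 1`, and `S = {-θ, 0, θ}` if `n ≥ 3`. -/
def Sset (q : ℝ) (n : ℕ) : Set ℝ :=
  if n = 1 then {0} else {-theta q n, 0, theta q n}

/-- `I = (-θ, θ)` (all of `ℝ` when `n = 1`). -/
def Iset (q : ℝ) (n : ℕ) : Set ℝ :=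
  if n = 1 then Set.univ else Set.Ioo (-theta q n) (theta q n)

/-- The `n,q`-power difference operator `D_{n,q}`. -/
def Dnq (q : ℝ) (n : ℕ) (f : ℝ → ℝ) (t : ℝ) : ℝ :=
  if t ∈ Sset q n then deriv f t
  else (f (q * t ^ n) - f t) / (q * t ^ n - t)

/-- The `k`-th summand of the series defining the `n,q`-integral `∫_0^x f(t) d_{n,q}t`. -/
def nqSeq (q : ℝ) (n : ℕ) (f : ℝ → ℝ) (x : ℝ) (k : ℕ) : ℝ :=
  q ^ nbr n k * x ^ n ^ k * (q ^ n ^ k * x ^ (n ^ k * (n - 1)) - 1) *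
    f (q ^ nbr n k * x ^ n ^ k)

/-- `∫_0^x f(t) d_{n,q}t`. -/
def nqInt0 (q : ℝ) (n : ℕ) (f : ℝ → ℝ) (x : ℝ) : ℝ := -∑' k : ℕ, nqSeq q n f x k

/-- `∫_a^b f(t) d_{n,q}t = ∫_0^b f(t) d_{n,q}t − ∫_0^a f(t) d_{n,q}t`. -/
def nqInt (q : ℝ) (n : ℕ) (f : ℝ → ℝ) (a b : ℝ) : ℝ :=
  nqInt0 q n f b - nqInt0 q n f a

/-- The orbit `[s]_{n,q} = {q^{[k]_n}·s^{n^k} : k ∈ ℕ}`. -/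
def nqOrbit (q : ℝ) (n : ℕ) (s : ℝ) : Set ℝ :=
  Set.range fun k : ℕ => q ^ nbr n k * s ^ n ^ k

/-- The `n,q`-interval `[a,b]_{n,q}`. -/
def nqInterval (q : ℝ) (n : ℕ) (a b : ℝ) : Set ℝ :=
  nqOrbit q n a ∪ nqOrbit q n b ∪ {0}

def Gfun (q : ℝ) (n : ℕ) (x : ℝ) (k : ℕ) : ℝ := q ^ nbr n k * x ^ n ^ k

lemma nbr_succ (n k : ℕ) : nbr n (k+1) = nbr n k + n ^ k := Finset.sum_range_succ _ _

lemma le_nbr (n : ℕ) (hn : 1 ≤ n) (k : ℕ) : k ≤ nbr n k := by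
  unfold nbr
  calc k = ∑ _i ∈ Finset.range k, 1 := by simp
  _ ≤ _ := Finset.sum_le_sum fun i _ => Nat.one_le_pow _ _ hn

lemma Gfun_succ (q : ℝ) (n : ℕ) (hn : 1 ≤ n) (x : ℝ) (k : ℕ) :
    Gfun q n x (k+1) = q ^ n ^ k * x ^ (n ^ k * (n - 1)) * Gfun q n x k := by
  unfold Gfun
  rw [nbr_succ, pow_add]
  have h1 : n ^ (k+1) = n ^ k * (n-1) + n ^ k := by
    have h2 : n - 1 + 1 = n := Nat.succ_pred_eq_of_pos hn
    calc n ^ (k+1) = n ^ k * n := pow_succ n k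
    _ = n ^ k * (n - 1 + 1) := by rw [h2]
    _ = _ := by ring
  rw [h1, pow_add]
  ring

lemma nqSeq_eq (q : ℝ) (n : ℕ) (hn : 1 ≤ n) (f : ℝ → ℝ) (x : ℝ) (k : ℕ) :
    nqSeq q n f x k = (Gfun q n x (k+1) - Gfun q n x k) * f (Gfun q n x k) := by
  rw [Gfun_succ q n hn]
  unfold nqSeq Gfun
  ring

lemma Gfun_h (q : ℝ) (n : ℕ) (x : ℝ) (k : ℕ) :
    Gfun q n (q * x ^ n) k = Gfun q n x (k+1) := by
  unfold Gfun
  rw [nbr_succ, mul_pow, ← pow_mul, pow_add]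
  have h : n * n ^ k = n ^ (k+1) := (pow_succ' n k).symm
  rw [h]
  ring

lemma Gfun_abs_le (q : ℝ) (hq0 : 0 < q) (hq1 : q < 1) (n : ℕ) (hn : 1 ≤ n)
    (x : ℝ) (hx : |x| ≤ 1) (k : ℕ) : |Gfun q n x k| ≤ q ^ k * |x| := by
  unfold Gfun
  rw [abs_mul, abs_pow, abs_pow, abs_of_pos hq0]
  have h1 : q ^ nbr n k ≤ q ^ k :=
    pow_le_pow_of_le_one hq0.le hq1.le (le_nbr n hn k)
  have h2 : |x| ^ n ^ k ≤ |x| := by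
    calc |x| ^ n ^ k ≤ |x| ^ 1 :=
      pow_le_pow_of_le_one (abs_nonneg x) hx (Nat.one_le_pow _ _ hn)
    _ = |x| := pow_one _
  exact mul_le_mul h1 h2 (by positivity) (by positivity)

theorem stmt8 (q : ℝ) (hq0 : 0 < q) (hq1 : q < 1) (n : ℕ) (hn : Odd n)
    (f : ℝ → ℝ) (hf : ContinuousAt f 0)
    (hsum : ∀ t ∈ Iset q n, Summable (nqSeq q n f t)) :
    (∀ t ∈ Iset q n, Dnq q n (nqInt0 q n f) t = f t) ∧
    HasDerivAt (nqInt0 q n f) (f 0) 0 := by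
  have hn1 : 1 ≤ n := hn.pos
  have hq1' : 0 < 1 - q := by linarith
  have hθ : 0 < theta q n := Real.rpow_pos_of_pos hq0 _
  have hInhds : Iset q n ∈ 𝓝 (0:ℝ) := by
    unfold Iset
    split
    · exact Filter.univ_mem
    · exact Ioo_mem_nhds (by linarith) hθ
  have hF0 : nqInt0 q n f 0 = 0 := by
    unfold nqInt0
    have h : ∀ k : ℕ, nqSeq q n f 0 k = 0 := by
      intro k
      unfold nqSeq
      rw [zero_pow (by positivity : n ^ k ≠ 0)]
      ring
    rw [tsum_congr h, tsum_zero, neg_zero]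
  have hgeo : Summable (fun k : ℕ => q ^ k) := summable_geometric_of_lt_one hq0.le hq1
  have hderiv : HasDerivAt (nqInt0 q n f) (f 0) 0 := by
    rw [hasDerivAt_iff_isLittleO, Asymptotics.isLittleO_iff]
    intro c hc
    set ε := c * (1 - q) / 2 with hε
    have hε0 : 0 < ε := by positivity
    obtain ⟨δ, hδ0, hδ⟩ := Metric.continuousAt_iff.mp hf ε hε0
    have hball : Metric.ball (0:ℝ) (min δ 1) ∈ 𝓝 (0:ℝ) :=
      Metric.ball_mem_nhds _ (lt_min hδ0 one_pos)
    filter_upwards [hInhds, hball] with x hxI hxb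
    simp only [Metric.mem_ball, Real.dist_eq, sub_zero] at hxb
    have hx1 : |x| ≤ 1 := le_of_lt (lt_of_lt_of_le hxb (min_le_right _ _))
    have hxδ : |x| < δ := lt_of_lt_of_le hxb (min_le_left _ _)
    have hGb : ∀ k, |Gfun q n x k| ≤ q ^ k * |x| := Gfun_abs_le q hq0 hq1 n hn1 x hx1
    have hdiffb : ∀ k, |Gfun q n x k - Gfun q n x (k+1)| ≤ 2 * q ^ k * |x| := by
      intro k
      have hle : q ^ (k+1) ≤ q ^ k := pow_le_pow_of_le_one hq0.le hq1.le (Nat.le_succ k)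
      calc |Gfun q n x k - Gfun q n x (k+1)| ≤ |Gfun q n x k| + |Gfun q n x (k+1)| :=
        abs_sub _ _
      _ ≤ q ^ k * |x| + q ^ (k+1) * |x| := add_le_add (hGb k) (hGb (k+1))
      _ ≤ 2 * q ^ k * |x| := by nlinarith [abs_nonneg x]
    have hsumd : Summable (fun k => Gfun q n x k - Gfun q n x (k+1)) := by
      apply Summable.of_norm_bounded (hgeo.mul_left (2 * |x|))
      intro k
      rw [Real.norm_eq_abs]
      calc |Gfun q n x k - Gfun q n x (k+1)| ≤ 2 * q ^ k * |x| := hdiffb k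
      _ = 2 * |x| * q ^ k := by ring
    have htsum : ∑' k, (Gfun q n x k - Gfun q n x (k+1)) = x := by
      have h1 := hsumd.hasSum.tendsto_sum_nat
      have h2 : ∀ m, ∑ i ∈ Finset.range m, (Gfun q n x i - Gfun q n x (i+1))
          = x - Gfun q n x m := by
        intro m
        rw [Finset.sum_range_sub' (fun i => Gfun q n x i)]
        congr 1
        unfold Gfun nbr
        simp
      have h3 : Tendsto (fun m => Gfun q n x m) atTop (𝓝 0) := by
        apply squeeze_zero_norm (fun m => (hGb m))
        have := (tendsto_pow_atTop_nhds_zero_of_lt_one hq0.le hq1).mul_const |x|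
        simpa using this
      have h4 : Tendsto (fun m => x - Gfun q n x m) atTop (𝓝 x) := by
        simpa using tendsto_const_nhds.sub h3
      rw [funext h2] at h1
      exact tendsto_nhds_unique h1 h4
    have hsumf : Summable (fun k => (Gfun q n x k - Gfun q n x (k+1)) * f (Gfun q n x k)) := by
      apply (hsum x hxI).neg.congr
      intro k
      rw [nqSeq_eq q n hn1]
      ring
    have hFx : nqInt0 q n f x
        = ∑' k, (Gfun q n x k - Gfun q n x (k+1)) * f (Gfun q n x k) := by
      unfold nqInt0
      rw [← tsum_neg]
      apply tsum_congr
      intro k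
      rw [nqSeq_eq q n hn1]
      ring
    have hkey : nqInt0 q n f x - x * f 0
        = ∑' k, (Gfun q n x k - Gfun q n x (k+1)) * (f (Gfun q n x k) - f 0) := by
      rw [hFx, tsum_congr (fun k => mul_sub (Gfun q n x k - Gfun q n x (k+1)) (f (Gfun q n x k)) (f 0)),
        Summable.tsum_sub hsumf (hsumd.mul_right (f 0)), tsum_mul_right, htsum]
    have hb : ∀ k, ‖(Gfun q n x k - Gfun q n x (k+1)) * (f (Gfun q n x k) - f 0)‖
        ≤ 2 * q ^ k * |x| * ε := by
      intro k
      rw [Real.norm_eq_abs, abs_mul]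
      have hfb : |f (Gfun q n x k) - f 0| ≤ ε := by
        apply le_of_lt
        have hd : dist (Gfun q n x k) 0 < δ := by
          rw [Real.dist_eq, sub_zero]
          calc |Gfun q n x k| ≤ q ^ k * |x| := hGb k
          _ ≤ 1 * |x| := mul_le_mul_of_nonneg_right (pow_le_one₀ hq0.le hq1.le) (abs_nonneg x)
          _ = |x| := one_mul _
          _ < δ := hxδ
        have := hδ hd
        rwa [Real.dist_eq] at this
      exact mul_le_mul (hdiffb k) hfb (abs_nonneg _) (by positivity)
    have hsumb : Summable (fun k => 2 * q ^ k * |x| * ε) := by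
      apply (hgeo.mul_left (2 * |x| * ε)).congr
      intro k
      ring
    have hnormsum : Summable
        (fun k => ‖(Gfun q n x k - Gfun q n x (k+1)) * (f (Gfun q n x k) - f 0)‖) :=
      Summable.of_nonneg_of_le (fun k => norm_nonneg _) hb hsumb
    rw [hF0, sub_zero, sub_zero, smul_eq_mul, Real.norm_eq_abs, Real.norm_eq_abs]
    calc |nqInt0 q n f x - x * f 0|
        = ‖∑' k, (Gfun q n x k - Gfun q n x (k+1)) * (f (Gfun q n x k) - f 0)‖ := by
          rw [hkey, Real.norm_eq_abs]
    _ ≤ ∑' k, ‖(Gfun q n x k - Gfun q n x (k+1)) * (f (Gfun q n x k) - f 0)‖ :=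
        norm_tsum_le_tsum_norm hnormsum
    _ ≤ ∑' k, 2 * q ^ k * |x| * ε := Summable.tsum_le_tsum hb hnormsum hsumb
    _ = (2 * |x| * ε) * ∑' k : ℕ, q ^ k := by
        rw [← tsum_mul_left]
        exact tsum_congr fun k => by ring
    _ = (2 * |x| * ε) * (1 - q)⁻¹ := by rw [tsum_geometric_of_lt_one hq0.le hq1]
    _ = c * |x| := by
        rw [hε]
        field_simp
  refine ⟨?_, hderiv⟩
  intro t ht
  by_cases hS : t ∈ Sset q n
  · have ht0 : t = 0 := by
      by_cases h1 : n = 1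
      · simpa [Sset, h1] using hS
      · simp only [Sset, h1, if_false] at hS
        simp only [Iset, h1, if_false, Set.mem_Ioo] at ht
        simp only [Set.mem_insert_iff, Set.mem_singleton_iff] at hS
        rcases hS with h | h | h
        · exfalso; rw [h] at ht; exact lt_irrefl _ ht.1
        · exact h
        · exfalso; rw [h] at ht; exact lt_irrefl _ ht.2
    unfold Dnq
    rw [if_pos hS, ht0, hderiv.deriv]
  · unfold Dnq
    rw [if_neg hS]
    have h0S : (0:ℝ) ∈ Sset q n := by
      unfold Sset
      split <;> simp
    have ht0 : t ≠ 0 := fun h => hS (h ▸ h0S)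
    have hne : q * t ^ n - t ≠ 0 := by
      intro h
      have heq : q * t ^ n = t := by linarith
      have htn : t ^ n = t * t ^ (n-1) := by
        conv_lhs => rw [show n = 1 + (n-1) by omega]
        rw [pow_add, pow_one]
      have h2 : q * t ^ (n-1) = 1 := by
        have h3 : t * (q * t ^ (n-1)) = t * 1 := by
          calc t * (q * t ^ (n-1)) = q * (t * t ^ (n-1)) := by ring
          _ = q * t ^ n := by rw [← htn]
          _ = t := heq
          _ = t * 1 := (mul_one t).symm
        exact mul_left_cancel₀ ht0 h3
      by_cases h1 : n = 1
      · subst h1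
        simp at h2
        linarith
      · have hn3 : 3 ≤ n := by
          rcases hn with ⟨m, hm⟩
          omega
        have hlt : |t| < theta q n := by
          simp only [Iset, h1, if_false, Set.mem_Ioo] at ht
          exact abs_lt.mpr ⟨ht.1, ht.2⟩
        have hθpow : theta q n ^ (n-1) = q⁻¹ := by
          unfold theta
          rw [← Real.rpow_natCast (q ^ ((1:ℝ)/(1-(n:ℝ)))) (n-1), ← Real.rpow_mul hq0.le]
          have hc : (1:ℝ)/(1-(n:ℝ)) * ((n-1 : ℕ) : ℝ) = -1 := by
            have hcast : ((n-1 : ℕ) : ℝ) = (n:ℝ) - 1 := by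
              push_cast [Nat.cast_sub hn1]
              ring
            have hne1 : (1:ℝ) - (n:ℝ) ≠ 0 := by
              have : (n:ℝ) ≥ 3 := by exact_mod_cast hn3
              intro hcon
              linarith
            rw [hcast]
            field_simp
            ring
          rw [hc, Real.rpow_neg_one]
        have hev : Even (n - 1) := Nat.Odd.sub_odd hn odd_one
        have habs : |t| ^ (n-1) = q⁻¹ := by
          have htq : t ^ (n-1) = q⁻¹ := by
            rw [inv_eq_one_div, eq_div_iff hq0.ne']
            linear_combination h2
          rw [hev.pow_abs, htq]
        have hcon : |t| ^ (n-1) < theta q n ^ (n-1) :=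
          pow_lt_pow_left₀ hlt (abs_nonneg t) (by omega)
        rw [habs, hθpow] at hcon
        exact lt_irrefl _ hcon
    have hkey : nqInt0 q n f (q * t ^ n) = nqInt0 q n f t + (q * t ^ n - t) * f t := by
      unfold nqInt0
      have hshift : ∀ k, nqSeq q n f (q * t ^ n) k = nqSeq q n f t (k+1) := by
        intro k
        rw [nqSeq_eq q n hn1, nqSeq_eq q n hn1, Gfun_h, Gfun_h]
      rw [tsum_congr hshift]
      have hsplit := Summable.tsum_eq_zero_add (hsum t ht)
      have h0 : nqSeq q n f t 0 = (q * t ^ n - t) * f t := by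
        have htn : t ^ n = t * t ^ (n-1) := by
          conv_lhs => rw [show n = 1 + (n-1) by omega]
          rw [pow_add, pow_one]
        simp only [nqSeq, nbr, Finset.range_zero, Finset.sum_empty, pow_zero, pow_one, one_mul]
        rw [htn]
        ring
      rw [h0] at hsplit
      linarith
    rw [hkey]
    rw [show nqInt0 q n f t + (q * t ^ n - t) * f t - nqInt0 q n f t
      = (q * t ^ n - t) * f t from by ring]
    exact mul_div_cancel_left₀ (f t) hne
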